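/- Let w be a pp-irreducible string, b ≤ c positions of w, and f = max{ 𝓕_w(d) : b ≤ d ≤ c }. Then f = max{ 𝓕_w(d) : b ≤ d ≤ f }. -/

import Mathlib

/-!
Common definitions: strings as `List α` over an alphabet `α`, 1-based positions.
-/

variable {α : Type*}

/-- The substring `w[i:j]` (1-based, inclusive; empty when `j < i`). -/
def seg (w : List α) (i j : ℕ) : List α := (w.take j).drop (i - 1)

/-- `w` has an even palindrome of radius `r` centered at position `c`:
`r ≤ c`, `c + r ≤ |w|` and `w[c−k+1] = w[c+k]` for all `1 ≤ k ≤ r`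
(here expressed with 0-based list indexing: `w[c−k]? = w[c+k−1]?`). -/
def PalAt (w : List α) (c r : ℕ) : Prop :=
  r ≤ c ∧ c + r ≤ w.length ∧ ∀ k, 1 ≤ k → k ≤ r → w[c - k]? = w[c + k - 1]?

/-- `ρ_w(c)`: the maximal even-palindrome radius at center `c`. -/
noncomputable def rho (w : List α) (c : ℕ) : ℕ := sSup {r | PalAt w c r}

/-- The reduction relation: `x y yᴿ y z → x y z` for nonempty `y`. -/
def Reduces (w w' : List α) : Prop :=
  ∃ x y z : List α, y ≠ [] ∧ w = x ++ y ++ y.reverse ++ y ++ z ∧ w' = x ++ y ++ z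

/-- A string is irreducible if no reduction applies to it. -/
def ZIrreducible (w : List α) : Prop := ∀ w', ¬ Reduces w w'

def ZReducible (w : List α) : Prop := ∃ w', Reduces w w'

/-- `w` is pp-irreducible if its longest proper prefix `w[1:|w|−1]` is irreducible. -/
def PPIrreducible (w : List α) : Prop := ZIrreducible w.dropLast

/-- `w` is ss-reducible if it is reducible and pp-irreducible. -/
def SSReducible (w : List α) : Prop := ZReducible w ∧ PPIrreducible w

/-- A Z-shape occurrence `⟨p1, p2⟩` in `w`: with `s = p2 − p1 ≥ 1`, `p1 − s ≥ 0`,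
`p2 + s ≤ |w|` and `w[p1−s+1 : p2+s] = x xᴿ x` where `x = w[p1−s+1 : p1]`. -/
def ZOcc (w : List α) (p1 p2 : ℕ) : Prop :=
  p1 < p2 ∧ p2 - p1 ≤ p1 ∧ p2 + (p2 - p1) ≤ w.length ∧
    seg w (p1 - (p2 - p1) + 1) (p2 + (p2 - p1)) =
      seg w (p1 - (p2 - p1) + 1) p1 ++ (seg w (p1 - (p2 - p1) + 1) p1).reverse ++
        seg w (p1 - (p2 - p1) + 1) p1

/-- `c ⊏_w d` : `c ≤ d − ρ_w(d) ≤ d ≤ c + ρ_w(c) ≤ d + ρ_w(d)` with `c ≠ d`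
(written without truncated subtraction). -/
def Sqsub (w : List α) (c d : ℕ) : Prop :=
  c < d ∧ c + rho w d ≤ d ∧ d ≤ c + rho w c ∧ c + rho w c ≤ d + rho w d

/-- `𝓕_w(c)`: the maximum frontier over all palindrome chains from `c`
(a palindrome chain is a nonempty list starting at `c` whose consecutive
elements are related by `⊏_w`; its frontier is `e + ρ_w(e)` for its last element `e`). -/
noncomputable def maxFrontier (w : List α) (c : ℕ) : ℕ :=
  sSup {f | ∃ l : List ℕ, l.head? = some c ∧ l.Chain' (Sqsub w) ∧
      ∃ e, l.getLast? = some e ∧ f = e + rho w e}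

/-- `𝓐_w(d)`: the smallest position `c` with `c ≤ d ≤ 𝓕_w(c)`. -/
noncomputable def originator (w : List α) (d : ℕ) : ℕ :=
  sInf {c | 1 ≤ c ∧ c ≤ d ∧ d ≤ maxFrontier w c}

/-- A position `c` of a pp-irreducible string `w` is stable if `𝓕_w(c) < |w|`. -/
def Stable (w : List α) (c : ℕ) : Prop := maxFrontier w c < w.length

/-- `c` is strongly stable if every position in `[1:c]` is stable. -/
def StronglyStable (w : List α) (c : ℕ) : Prop := ∀ e, 1 ≤ e → e ≤ c → Stable w e

/-- `T` is the output of an end-to-end walk on the path graph labeled `u`: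
there are vertices `p 0 = 0, …, p |T| = |u|`, each `≤ |u|`, consecutive ones
adjacent, and `T[i] = u[max (p (i−1)) (p i)]` (1-based; here 0-based indexing). -/
def EndToEndWalkOutput (u T : List α) : Prop :=
  ∃ p : ℕ → ℕ, p 0 = 0 ∧ p T.length = u.length ∧
    (∀ i, i ≤ T.length → p i ≤ u.length) ∧
    (∀ i, i < T.length → p (i + 1) = p i + 1 ∨ p i = p (i + 1) + 1) ∧
    (∀ i, i < T.length → T[i]? = u[max (p i) (p (i + 1)) - 1]?)

/-- `P` is accurate enough between `a` and `b`:
`min (P e) (b − e) = min (ρ_w e) (b − e)` for all `e ∈ [a:b]`. -/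
def AccEnough (w : List α) (P : ℕ → ℕ) (a b : ℕ) : Prop :=
  ∀ e, a ≤ e → e ≤ b → min (P e) (b - e) = min (rho w e) (b - e)

open Classical in
/-- `ν_w(c)`: the largest `e` with `e ⊏_w c`, or `1` if there is none. -/
noncomputable def nu (w : List α) (c : ℕ) : ℕ :=
  if ∃ e, Sqsub w e c then sSup {e | Sqsub w e c} else 1

/-- `c` is left-good w.r.t. `P` if `P` is accurate enough between `ν_w(c)` and `c`. -/
def LeftGood (w : List α) (P : ℕ → ℕ) (c : ℕ) : Prop := AccEnough w P (nu w c) c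

/-- `c` is right-good w.r.t. `P` if `P` is accurate enough between `c` and `c + ρ_w(c)`. -/
def RightGood (w : List α) (P : ℕ → ℕ) (c : ℕ) : Prop := AccEnough w P c (c + rho w c)

/-! ### Auxiliary lemmas -/

section Aux
variable {w : List α} {c r s : ℕ}

private lemma palAt_zero (h : c ≤ w.length) : PalAt w c 0 :=
  ⟨Nat.zero_le _, by omega, fun k hk1 hk0 => by omega⟩

private lemma palAt_mono (h : PalAt w c r) (hs : s ≤ r) : PalAt w c s :=
  ⟨le_trans hs h.1, by have := h.2.1; omega, fun k hk1 hks => h.2.2 k hk1 (le_trans hks hs)⟩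

private lemma bdd_palAt : BddAbove {r | PalAt w c r} := ⟨c, fun r hr => hr.1⟩

private lemma palAt_le_rho (h : PalAt w c r) : r ≤ rho w c := le_csSup bdd_palAt h

private lemma rho_palAt (h : 1 ≤ rho w c) : PalAt w c (rho w c) := by
  have hne : {r | PalAt w c r}.Nonempty := by
    by_contra hne
    rw [Set.not_nonempty_iff_eq_empty] at hne
    rw [rho, hne, csSup_empty] at h
    simp at h
  exact Nat.sSup_mem hne bdd_palAt

private lemma add_rho_le (h : c ≤ w.length) : c + rho w c ≤ w.length := by
  rcases Nat.eq_zero_or_pos (rho w c) with h0 | h1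
  · omega
  · exact (rho_palAt h1).2.1

/-- The palindrome equality at the segment level. -/
private lemma pal_seg_eq (h : PalAt w c r) :
    ((w.drop (c - r)).take r).reverse = (w.drop c).take r := by
  obtain ⟨hrc, hcr, hk⟩ := h
  have hlen : ((w.drop (c - r)).take r).length = r := by
    simp [List.length_take, List.length_drop]; omega
  apply List.ext_getElem?
  intro n
  by_cases hn : n < r
  · rw [List.getElem?_reverse (by omega)]
    rw [hlen, List.getElem?_take, if_pos (by omega), List.getElem?_drop]
    rw [List.getElem?_take, if_pos hn, List.getElem?_drop]
    have := hk (n + 1) (by omega) (by omega)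
    have e1 : c - r + (r - 1 - n) = c - (n + 1) := by omega
    have e2 : c + n = c + (n + 1) - 1 := by omega
    rw [e1, e2, this]
  · rw [List.getElem?_eq_none (by rw [List.length_reverse, hlen]; omega),
      List.getElem?_eq_none (by simp [List.length_take, List.length_drop]; omega)]

/-- Two overlapping maximal palindromes produce a `y yᴿ y` occurrence. -/
private lemma pal_pal_reducible {g s : ℕ} (hs : 1 ≤ s)
    (h1 : PalAt w g s) (h2 : PalAt w (g + s) s) (hlen : g + 2 * s < w.length) :
    ZReducible w.dropLast := by
  set y : List α := (w.drop (g - s)).take s with hy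
  have hsg : s ≤ g := h1.1
  have ha : y.reverse = (w.drop g).take s := by
    have := pal_seg_eq h1; rwa [← hy] at this
  have hb : (w.drop (g + s)).take s = y := by
    have := pal_seg_eq h2
    have e : g + s - s = g := by omega
    rw [e, ← ha] at this
    rw [← this, List.reverse_reverse]
  have e1 : w.drop (g - s) = y ++ w.drop g := by
    conv_lhs => rw [← List.take_append_drop s (w.drop (g - s))]
    rw [List.drop_drop]
    congr 2
    omega
  have e2 : w.drop g = y.reverse ++ w.drop (g + s) := by
    conv_lhs => rw [← List.take_append_drop s (w.drop g)]
    rw [List.drop_drop, ha]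
  have e3 : w.drop (g + s) = y ++ w.drop (g + 2 * s) := by
    conv_lhs => rw [← List.take_append_drop s (w.drop (g + s))]
    rw [List.drop_drop, hb]
    congr 2
    omega
  have key : w = w.take (g - s) ++ (y ++ (y.reverse ++ (y ++ w.drop (g + 2 * s)))) := by
    conv_lhs => rw [← List.take_append_drop (g - s) w]
    rw [e1, e2, e3]
  have hz : w.drop (g + 2 * s) ≠ [] := by
    simp [List.drop_eq_nil_iff]
    omega
  have hyne : y ≠ [] := by
    have : y.length = min s (w.length - (g - s)) := by simp [hy]
    intro h
    rw [h] at this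
    simp at this
    omega
  have hdl : w.dropLast =
      w.take (g - s) ++ (y ++ (y.reverse ++ (y ++ (w.drop (g + 2 * s)).dropLast))) := by
    conv_lhs => rw [key]
    rw [List.dropLast_append_of_ne_nil (by simp [hz]),
        List.dropLast_append_of_ne_nil (by simp [hz]),
        List.dropLast_append_of_ne_nil (by simp [hz]),
        List.dropLast_append_of_ne_nil hz]
  exact ⟨w.take (g - s) ++ y ++ (w.drop (g + 2 * s)).dropLast,
    w.take (g - s), y, (w.drop (g + 2 * s)).dropLast, hyne,
    by rw [hdl]; simp [List.append_assoc], rfl⟩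

/-- Reachability by a palindrome chain. -/
private def Reach (w : List α) (e g : ℕ) : Prop :=
  ∃ l : List ℕ, l.head? = some e ∧ l.Chain' (Sqsub w) ∧ l.getLast? = some g

private lemma reach_self (w : List α) (e : ℕ) : Reach w e e :=
  ⟨[e], rfl, List.isChain_singleton e, rfl⟩

private lemma chain_bound : ∀ (t : List ℕ) (e : ℕ), e ≤ w.length →
    List.Chain (Sqsub w) e t → ∀ x ∈ e :: t, x + rho w x ≤ w.length := by
  intro t
  induction t with
  | nil =>
    intro e he _ x hx
    simp at hx; subst hx
    exact add_rho_le he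
  | cons g1 t ih =>
    intro e he hch x hx
    change List.IsChain _ (_ :: _ :: _) at hch
    rw [List.chain_cons] at hch
    have hg1 : g1 ≤ w.length := le_trans hch.1.2.2.1 (add_rho_le he)
    rcases List.mem_cons.1 hx with rfl | hx'
    · exact add_rho_le he
    · exact ih g1 hg1 hch.2 x hx'

private lemma bdd_frontier {e : ℕ} (he : e ≤ w.length) :
    BddAbove {f | ∃ l : List ℕ, l.head? = some e ∧ l.Chain' (Sqsub w) ∧
      ∃ g, l.getLast? = some g ∧ f = g + rho w g} := by
  refine ⟨w.length, ?_⟩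
  rintro f ⟨l, hh, hc, g, hl, rfl⟩
  cases l with
  | nil => simp at hh
  | cons a t =>
    have ha : e = a := by simpa using hh.symm
    subst ha
    exact chain_bound t e he hc g (List.mem_of_mem_getLast? (by simp [hl]))

private lemma reach_frontier_le {e g : ℕ} (he : e ≤ w.length) (h : Reach w e g) :
    g + rho w g ≤ maxFrontier w e := by
  obtain ⟨l, hh, hc, hl⟩ := h
  exact le_csSup (bdd_frontier he) ⟨l, hh, hc, g, hl, rfl⟩

private lemma self_le_maxFrontier {e : ℕ} (he : e ≤ w.length) :
    e + rho w e ≤ maxFrontier w e :=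
  reach_frontier_le he (reach_self w e)

private lemma maxFrontier_mem {e : ℕ} (he : e ≤ w.length) :
    ∃ g, Reach w e g ∧ maxFrontier w e = g + rho w g := by
  have hmem := Nat.sSup_mem (s := {f | ∃ l : List ℕ, l.head? = some e ∧
      l.Chain' (Sqsub w) ∧ ∃ g, l.getLast? = some g ∧ f = g + rho w g})
    ⟨e + rho w e, [e], rfl, List.isChain_singleton e, e, rfl, rfl⟩ (bdd_frontier he)
  obtain ⟨l, hh, hc, g, hl, hfg⟩ := hmem
  exact ⟨g, ⟨l, hh, hc, hl⟩, hfg⟩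

private lemma reach_snoc {e g d : ℕ} (h : Reach w e g) (hgd : Sqsub w g d) :
    Reach w e d := by
  obtain ⟨l, hh, hc, hl⟩ := h
  cases l with
  | nil => simp at hh
  | cons a t =>
    refine ⟨(a :: t) ++ [d], by simp at hh ⊢; exact hh, ?_, List.getLast?_concat⟩
    show List.IsChain (Sqsub w) ((a :: t) ++ [d])
    rw [List.isChain_append]
    refine ⟨hc, List.isChain_singleton d, ?_⟩
    intro x hx y hy
    simp at hy; subst hy
    rw [hl] at hx
    simp at hx; subst hx
    exact hgd

private lemma reach_cons {e g1 g : ℕ} (h1 : Sqsub w e g1) (h2 : Reach w g1 g) :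
    Reach w e g := by
  obtain ⟨l, hh, hc, hl⟩ := h2
  cases l with
  | nil => simp at hh
  | cons a t =>
    have ha : g1 = a := by simpa using hh.symm
    subst ha
    exact ⟨e :: g1 :: t, rfl, List.isChain_cons_cons.2 ⟨h1, hc⟩,
      by rw [List.getLast?_cons_cons]; exact hl⟩

private lemma mem_reach : ∀ (t : List ℕ) (e : ℕ), List.Chain (Sqsub w) e t →
    ∀ g ∈ e :: t, Reach w e g := by
  intro t
  induction t with
  | nil =>
    intro e _ g hg
    simp at hg; subst hg
    exact reach_self w g
  | cons g1 t ih =>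
    intro e hch g hg
    change List.IsChain _ (_ :: _ :: _) at hch
    rw [List.chain_cons] at hch
    rcases List.mem_cons.1 hg with rfl | hg'
    · exact reach_self w g
    · exact reach_cons hch.1 (ih g1 hch.2 g hg')

private lemma find_anchor : ∀ (t : List ℕ) (g0 gl d : ℕ), List.Chain (Sqsub w) g0 t →
    (g0 :: t).getLast? = some gl → g0 < d → d ≤ gl + rho w gl →
    ∃ g' ∈ g0 :: t, g' < d ∧ d ≤ g' + rho w g' := by
  intro t
  induction t with
  | nil =>
    intro g0 gl d _ hl h1 h2
    simp at hl; subst hl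
    exact ⟨g0, by simp, h1, h2⟩
  | cons g1 t ih =>
    intro g0 gl d hch hl h1 h2
    change List.IsChain _ (_ :: _ :: _) at hch
    rw [List.chain_cons] at hch
    rw [List.getLast?_cons_cons] at hl
    by_cases hd : g1 < d
    · obtain ⟨g', hg', h3, h4⟩ := ih g1 gl d hch.2 hl hd h2
      exact ⟨g', List.mem_cons_of_mem _ hg', h3, h4⟩
    · push_neg at hd
      exact ⟨g0, by simp, h1, le_trans hd hch.1.2.2.1⟩

private lemma step_bound (hpp : PPIrreducible w) {e : ℕ} (he : e ≤ w.length) {d : ℕ}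
    (hed : e < d) (hdf : d ≤ maxFrontier w e) : d + rho w d ≤ maxFrontier w e := by
  obtain ⟨g, hg, hfg⟩ := maxFrontier_mem he
  obtain ⟨l, hh, hc, hl⟩ := hg
  cases l with
  | nil => simp at hh
  | cons a t =>
    have ha : e = a := by simpa using hh.symm
    subst ha
    have hch : List.Chain (Sqsub w) e t := hc
    obtain ⟨g', hg'mem, h3, h4⟩ := find_anchor t e g d hch hl hed (by rw [← hfg]; exact hdf)
    have hreach' : Reach w e g' := mem_reach t e hch g' hg'mem
    have hfle : g' + rho w g' ≤ maxFrontier w e := reach_frontier_le he hreach'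
    by_cases hcase : d + rho w d ≤ g' + rho w g'
    · omega
    push_neg at hcase
    by_cases hsmall : g' + rho w d ≤ d
    · exact reach_frontier_le he (reach_snoc hreach' ⟨h3, hsmall, h4, by omega⟩)
    · exfalso
      push_neg at hsmall
      set s := d - g' with hs
      have hs1 : 1 ≤ s := by omega
      have hrg' : s ≤ rho w g' := by omega
      have hrd : s + 1 ≤ rho w d := by omega
      have hpg : PalAt w g' s := palAt_mono (rho_palAt (by omega)) hrg'
      have hpd' : PalAt w d (rho w d) := rho_palAt (by omega)
      have hpd : PalAt w d s := palAt_mono hpd' (by omega)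
      have hdw : d + rho w d ≤ w.length := hpd'.2.1
      have hd : d = g' + s := by omega
      obtain ⟨w', hw'⟩ := pal_pal_reducible hs1 hpg (by rw [← hd]; exact hpd) (by omega)
      exact hpp w' hw'

private lemma chain_inv (hpp : PPIrreducible w) {e : ℕ} (he : e ≤ w.length) :
    ∀ (t : List ℕ) (x0 : ℕ), e < x0 → x0 ≤ maxFrontier w e →
      List.Chain (Sqsub w) x0 t → ∀ x ∈ x0 :: t, e < x ∧ x ≤ maxFrontier w e := by
  intro t
  induction t with
  | nil =>
    intro x0 h1 h2 _ x hx
    simp at hx; subst hx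
    exact ⟨h1, h2⟩
  | cons x1 t ih =>
    intro x0 h1 h2 hch x hx
    change List.IsChain _ (_ :: _ :: _) at hch
    rw [List.chain_cons] at hch
    have hb : x0 + rho w x0 ≤ maxFrontier w e := step_bound hpp he h1 h2
    have h1' : e < x1 := lt_trans h1 hch.1.1
    have h2' : x1 ≤ maxFrontier w e := le_trans hch.1.2.2.1 hb
    rcases List.mem_cons.1 hx with rfl | hx'
    · exact ⟨h1, h2⟩
    · exact ih x1 h1' h2' hch.2 x hx'

private lemma frontier_mono (hpp : PPIrreducible w) {e : ℕ} (he : e ≤ w.length) {d : ℕ}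
    (hed : e < d) (hdf : d ≤ maxFrontier w e) : maxFrontier w d ≤ maxFrontier w e := by
  unfold maxFrontier
  refine csSup_le ?_ ?_
  · exact ⟨d + rho w d, [d], rfl, List.isChain_singleton d, d, rfl, rfl⟩
  rintro f ⟨l, hh, hc, g, hl, rfl⟩
  cases l with
  | nil => simp at hh
  | cons a t =>
    have ha : d = a := by simpa using hh.symm
    subst ha
    have hch : List.Chain (Sqsub w) d t := hc
    have hmem : g ∈ d :: t := List.mem_of_mem_getLast? (by simp [hl])
    have hg := chain_inv hpp he t d hed hdf hch g hmem
    exact step_bound hpp he hg.1 hg.2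

end Aux

/-- for positions `b ≤ c` of a pp-irreducible string and
`f = max{𝓕_w(d) : b ≤ d ≤ c}`, one has `f = max{𝓕_w(d) : b ≤ d ≤ f}`. -/
theorem maxFrontier_sup_extend (w : List α) (hpp : PPIrreducible w) (b c : ℕ)
    (hb : 1 ≤ b) (hbc : b ≤ c) (hc : c ≤ w.length) :
    (Finset.Icc b c).sup (maxFrontier w) =
      (Finset.Icc b ((Finset.Icc b c).sup (maxFrontier w))).sup (maxFrontier w) := by
  classical
  set f := (Finset.Icc b c).sup (maxFrontier w) with hf
  have hcf : c ≤ f := by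
    have h1 : maxFrontier w c ≤ f := Finset.le_sup (Finset.mem_Icc.2 ⟨hbc, le_rfl⟩)
    have h2 : c + rho w c ≤ maxFrontier w c := self_le_maxFrontier hc
    omega
  apply le_antisymm
  · exact Finset.sup_mono (Finset.Icc_subset_Icc_right hcf)
  · apply Finset.sup_le
    intro d hd
    rw [Finset.mem_Icc] at hd
    by_cases hdc : d ≤ c
    · exact Finset.le_sup (Finset.mem_Icc.2 ⟨hd.1, hdc⟩)
    · push_neg at hdc
      obtain ⟨e, hemem, hfe⟩ := Finset.exists_mem_eq_sup (Finset.Icc b c)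
        (Finset.nonempty_Icc.2 hbc) (maxFrontier w)
      rw [Finset.mem_Icc] at hemem
      have hew : e ≤ w.length := le_trans hemem.2 hc
      have hed : e < d := lt_of_le_of_lt hemem.2 hdc
      have hmono : maxFrontier w d ≤ maxFrontier w e :=
        frontier_mono hpp hew hed (by rw [← hfe]; exact hd.2)
      rw [hf, hfe]
      exact hmono
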